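/- Four positive real numbers u₁, u₂, u₃, u₄ are, respectively, the two side lengths and the two diagonal lengths of some nondegenerate parallelogram in the Euclidean plane if and only if they satisfy the equation u₃² + u₄² = 2u₁² + 2u₂² and the inequalities |u₁ − u₂| < u₃ < u₁ + u₂. -/

import Mathlib

open scoped RealInnerProductSpace


set_option maxHeartbeats 1600000 in
/-- A nondegenerate parallelogram in the Euclidean plane is a quadruple of points
`A B F E` with `B - A = F - E` and `A, E, F` not collinear; `u₁ = dist A E`,
`u₂ = dist E F` are its side lengths, `u₃ = dist A F`, `u₄ = dist E B` its diagonals. -/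
theorem parallelogram_characterization_u3
    (u₁ u₂ u₃ u₄ : ℝ) (h₁ : 0 < u₁) (h₂ : 0 < u₂) (h₃ : 0 < u₃) (h₄ : 0 < u₄) :
    (∃ A B F E : EuclideanSpace ℝ (Fin 2),
        B - A = F - E ∧
        ¬ Collinear ℝ ({A, E, F} : Set (EuclideanSpace ℝ (Fin 2))) ∧
        dist A E = u₁ ∧ dist E F = u₂ ∧ dist A F = u₃ ∧ dist E B = u₄) ↔
      (u₃ ^ 2 + u₄ ^ 2 = 2 * u₁ ^ 2 + 2 * u₂ ^ 2 ∧ |u₁ - u₂| < u₃ ∧ u₃ < u₁ + u₂) := by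
  constructor
  · rintro ⟨A, B, F, E, hpar, hncol, hAE, hEF, hAF, hEB⟩
    set a := A - E with ha_def
    set f := F - E with hf_def
    have hEmem : E ∈ ({A, E, F} : Set (EuclideanSpace ℝ (Fin 2))) := by simp
    have key : ∀ r : ℝ, a ≠ r • f := by
      intro r hr
      apply hncol
      rw [collinear_iff_of_mem hEmem]
      refine ⟨f, ?_⟩
      rintro p (rfl | rfl | rfl)
      · exact ⟨r, by rw [vadd_eq_add, ← hr, ha_def]; abel⟩
      · exact ⟨0, by simp⟩
      · exact ⟨1, by rw [vadd_eq_add, one_smul, hf_def]; abel⟩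
    have ha : ‖a‖ = u₁ := by rw [ha_def, ← dist_eq_norm]; exact hAE
    have hf : ‖f‖ = u₂ := by
      rw [hf_def, ← dist_eq_norm, dist_comm]; exact hEF
    have hd : ‖a - f‖ = u₃ := by
      have : a - f = A - F := by rw [ha_def, hf_def]; abel
      rw [this, ← dist_eq_norm]; exact hAF
    have hs : ‖a + f‖ = u₄ := by
      have : a + f = B - E := by
        have : B - A = F - E := hpar
        rw [ha_def, hf_def]
        rw [sub_eq_iff_eq_add] at this
        rw [this]; abel
      rw [this, ← dist_eq_norm, dist_comm]; exact hEB
    have hf0 : f ≠ 0 := by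
      intro h
      rw [h, norm_zero] at hf
      exact h₂.ne hf
    have hfn : (0:ℝ) < ‖f‖ := by rw [hf]; exact h₂
    have hI1 : ⟪a, f⟫ < ‖a‖ * ‖f‖ := by
      rw [inner_lt_norm_mul_iff_real]
      intro h
      apply key (‖a‖ / ‖f‖)
      have h2 := congrArg (fun z => (‖f‖)⁻¹ • z) h
      simp only [inv_smul_smul₀ hfn.ne', smul_smul] at h2
      rw [div_eq_inv_mul]
      exact h2
    have hI2 : -⟪a, f⟫ < ‖a‖ * ‖f‖ := by
      have h2 := @inner_lt_norm_mul_iff_real (EuclideanSpace ℝ (Fin 2)) _ _ (-a) f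
      rw [norm_neg, inner_neg_left] at h2
      have h3 : -⟪a, f⟫ < ‖a‖ * ‖f‖ ↔ ‖f‖ • -a ≠ ‖a‖ • f := by
        convert h2 using 2 <;> simp
      rw [h3]
      intro h
      apply key (-(‖a‖ / ‖f‖))
      have h4 := congrArg (fun z => (‖f‖)⁻¹ • z) h
      simp only [inv_smul_smul₀ hfn.ne', smul_smul] at h4
      rw [div_eq_inv_mul, neg_smul]
      exact neg_eq_iff_eq_neg.mp h4
    have hinner : |⟪a, f⟫| < u₁ * u₂ := by
      rw [abs_lt, ← ha, ← hf]
      exact ⟨by linarith, hI1⟩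
    have e3 : u₃ ^ 2 = u₁ ^ 2 - 2 * ⟪a, f⟫ + u₂ ^ 2 := by
      rw [← ha, ← hf, ← hd]; rw [@norm_sub_sq_real]
    have e4 : u₄ ^ 2 = u₁ ^ 2 + 2 * ⟪a, f⟫ + u₂ ^ 2 := by
      rw [← ha, ← hf, ← hs]; rw [@norm_add_sq_real]
    have hI := abs_lt.mp hinner
    refine ⟨by linarith, ?_, ?_⟩
    · rw [abs_lt]
      constructor
      · nlinarith [hI.1, hI.2, h₃, e3]
      · nlinarith [hI.1, hI.2, h₃, e3]
    · nlinarith [hI.1, hI.2, h₃, e3, h₁, h₂]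
  · rintro ⟨heq, habs, hlt⟩
    have hsq1 : (u₁ - u₂) ^ 2 < u₃ ^ 2 := by
      have := abs_lt.mp habs
      nlinarith
    have hsq2 : u₃ ^ 2 < (u₁ + u₂) ^ 2 := by nlinarith [h₃, hlt, h₁, h₂]
    set x : ℝ := (u₁ ^ 2 + u₂ ^ 2 - u₃ ^ 2) / (2 * u₁) with hx_def
    have hxval : 2 * u₁ * x = u₁ ^ 2 + u₂ ^ 2 - u₃ ^ 2 := by
      rw [hx_def]; field_simp
    have hx2 : 0 < u₂ ^ 2 - x ^ 2 := by
      have f1 : 0 < u₃ ^ 2 - (u₁ - u₂) ^ 2 := by linarith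
      have f2 : 0 < (u₁ + u₂) ^ 2 - u₃ ^ 2 := by linarith
      nlinarith [mul_pos f1 f2, mul_pos h₁ h₁, hxval]
    set y : ℝ := Real.sqrt (u₂ ^ 2 - x ^ 2) with hy_def
    have hy : y ^ 2 = u₂ ^ 2 - x ^ 2 := Real.sq_sqrt hx2.le
    have hy0 : 0 < y := Real.sqrt_pos.mpr hx2
    set A : EuclideanSpace ℝ (Fin 2) := (WithLp.equiv 2 (Fin 2 → ℝ)).symm ![u₁, 0] with hA_def
    set F : EuclideanSpace ℝ (Fin 2) := (WithLp.equiv 2 (Fin 2 → ℝ)).symm ![x, y] with hF_def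
    set E : EuclideanSpace ℝ (Fin 2) := 0 with hE_def
    set B : EuclideanSpace ℝ (Fin 2) := A + F with hB_def
    refine ⟨A, B, F, E, by rw [hB_def, hE_def]; abel, ?_, ?_, ?_, ?_, ?_⟩
    · intro hcol
      rw [collinear_iff_of_mem (show E ∈ ({A, E, F} : Set (EuclideanSpace ℝ (Fin 2))) by simp)]
        at hcol
      obtain ⟨v, hv⟩ := hcol
      obtain ⟨rA, hrA⟩ := hv A (by simp)
      obtain ⟨rF, hrF⟩ := hv F (by simp)
      have hA1 : A 1 = rA * v 1 := by rw [hrA]; simp [hE_def]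
      have hA0 : A 0 = rA * v 0 := by rw [hrA]; simp [hE_def]
      have hF1 : F 1 = rF * v 1 := by rw [hrF]; simp [hE_def]
      have hAv0 : A 0 = u₁ := by simp [hA_def]
      have hAv1 : A 1 = 0 := by simp [hA_def]
      have hFv1 : F 1 = y := by simp [hF_def]
      have hrA0 : rA ≠ 0 := by
        intro h; rw [h, zero_mul] at hA0; rw [hAv0] at hA0; exact h₁.ne' hA0
      have hv1 : v 1 = 0 := by
        rw [hAv1] at hA1
        field_simp at hA1
        rcases mul_eq_zero.mp hA1.symm with h | h
        · exact absurd h hrA0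
        · exact h
      rw [hFv1, hv1, mul_zero] at hF1
      exact hy0.ne' hF1
    · rw [EuclideanSpace.dist_eq]
      simp only [hA_def, hE_def, Fin.sum_univ_two, WithLp.equiv_symm_apply, PiLp.toLp_apply,
        Matrix.cons_val_zero, Matrix.cons_val_one, Matrix.head_cons, PiLp.zero_apply,
        Real.dist_eq, sub_zero, abs_zero, sq_abs]
      rw [show u₁ ^ 2 + (0:ℝ) ^ 2 = u₁ ^ 2 by ring, Real.sqrt_sq h₁.le]
    · rw [EuclideanSpace.dist_eq]
      simp only [hF_def, hE_def, Fin.sum_univ_two, WithLp.equiv_symm_apply, PiLp.toLp_apply,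
        Matrix.cons_val_zero, Matrix.cons_val_one, Matrix.head_cons, PiLp.zero_apply,
        Real.dist_eq, zero_sub, abs_neg, sq_abs]
      rw [show x ^ 2 + y ^ 2 = u₂ ^ 2 by linarith, Real.sqrt_sq h₂.le]
    · rw [EuclideanSpace.dist_eq]
      simp only [hA_def, hF_def, Fin.sum_univ_two, WithLp.equiv_symm_apply, PiLp.toLp_apply,
        Matrix.cons_val_zero, Matrix.cons_val_one, Matrix.head_cons,
        Real.dist_eq, zero_sub, abs_neg, sq_abs, neg_sq]
      rw [show (u₁ - x) ^ 2 + y ^ 2 = u₃ ^ 2 by nlinarith [hxval, hy], Real.sqrt_sq h₃.le]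
    · rw [EuclideanSpace.dist_eq]
      simp only [hA_def, hF_def, hE_def, hB_def, Fin.sum_univ_two, WithLp.equiv_symm_apply, PiLp.toLp_apply,
        PiLp.add_apply, Matrix.cons_val_zero, Matrix.cons_val_one, Matrix.head_cons,
        PiLp.zero_apply, Real.dist_eq, zero_sub, abs_neg, sq_abs, zero_add]
      rw [show (u₁ + x) ^ 2 + y ^ 2 = u₄ ^ 2 by nlinarith [hxval, hy, heq],
        Real.sqrt_sq h₄.le]
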